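/- arXiv:1905.03215 — 3 statements merged into one kernel-verified Lean document; each statement's English description precedes it below -/
import Mathlib

section
/- Let c : ℤ[i] → ℂ be finitely supported and supported on primitive Gaussian integers z = u + iv with gcd(u,v) = 1 and v ≠ 0. Then for every integer q ≥ 1 the determinant sum decomposes as S_q(c) = Σ_{d | q} S'_{q/d}(c_d), where for each divisor d of q the function c_d : ℤ[i] → ℂ is defined by c_d(u + iw) = c(u + idw). -/
open scoped ComplexConjugate
open scoped Classical

noncomputable section

/-- `z = u+iv` is *odd primitive*: `u ≢ v (mod 2)`, `gcd(u,v) = 1`, `uv ≠ 0`. -/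
def OddPrimitive (z : GaussianInt) : Prop :=
  ¬ z.re ≡ z.im [ZMOD 2] ∧ Int.gcd z.re z.im = 1 ∧ z.re * z.im ≠ 0

/-- The determinant sum `S_q = ∑_{u₁v₂ ≡ u₂v₁ (mod q)} c(z₁) conj (c(z₂))`. -/
def detSum (c : GaussianInt → ℂ) (q : ℕ) : ℂ :=
  ∑ᶠ z₁ : GaussianInt, ∑ᶠ z₂ : GaussianInt,
    if (q : ℤ) ∣ (z₁.re * z₂.im - z₂.re * z₁.im) then c z₁ * conj (c z₂) else 0

/-- The reduced determinant sum `S'_q`, with the extra condition `gcd(v₁v₂, q) = 1`. -/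
def detSum' (c : GaussianInt → ℂ) (q : ℕ) : ℂ :=
  ∑ᶠ z₁ : GaussianInt, ∑ᶠ z₂ : GaussianInt,
    if (q : ℤ) ∣ (z₁.re * z₂.im - z₂.re * z₁.im) ∧ Int.gcd (z₁.im * z₂.im) q = 1
    then c z₁ * conj (c z₂) else 0

/-- `S(Q,X) = ∑_{1 ≤ q ≤ Q} S_q` (the dependence on `X` is through the support of `c`). -/
def SQX (c : GaussianInt → ℂ) (Q : ℝ) : ℂ :=
  ∑ q ∈ Finset.Icc 1 ⌊Q⌋₊, detSum c q

/-- `c` is supported on odd primitive Gaussian integers `z` with `1 < |z|² ≤ X`. -/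
def SuppOK (c : GaussianInt → ℂ) (X : ℝ) : Prop :=
  ∀ z : GaussianInt, c z ≠ 0 →
    OddPrimitive z ∧ 1 < (Zsqrtd.norm z : ℝ) ∧ (Zsqrtd.norm z : ℝ) ≤ X

/-- The Siegel–Walfisz condition with exponent `B` and constant `K`. -/
def SWCond (c : GaussianInt → ℂ) (X B K : ℝ) : Prop :=
  ∀ (k ℓ : ℕ), 1 ≤ ℓ → ∀ (α : GaussianInt) (t : ℝ),
    ‖(∑ᶠ z : GaussianInt,
        if z ≠ 0 ∧ (ℓ : GaussianInt) ∣ (z - α) then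
          c z * (conj (GaussianInt.toComplex z) / GaussianInt.toComplex z) ^ k *
            ((‖GaussianInt.toComplex z‖ : ℝ) : ℂ) ^ ((t : ℂ) * Complex.I)
        else 0)‖
      ≤ K * (ℓ : ℝ) ^ 2 * ((k : ℝ) ^ 2 + 1) * (t ^ 2 + 1) * X * Real.log X ^ (-B)

/-- The dilated coefficients `c_d(u + iw) = c(u + i d w)`. -/
def cdil (d : ℕ) (c : GaussianInt → ℂ) : GaussianInt → ℂ :=
  fun z => c ⟨z.re, (d : ℤ) * z.im⟩

/-- Reindexing a finsum over dilated Gaussian integers as a finset sum. -/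
private lemma reindex_aux (c : GaussianInt → ℂ) (hfin : (Function.support c).Finite)
    (d : ℕ) (hd : 0 < d) (g : GaussianInt → ℂ)
    (hg : ∀ z : GaussianInt, g z ≠ 0 → c ⟨z.re, (d : ℤ) * z.im⟩ ≠ 0) :
    ∑ᶠ z, g z
      = ∑ z ∈ hfin.toFinset, if (d : ℤ) ∣ z.im then g ⟨z.re, z.im / d⟩ else 0 := by
  classical
  have hd' : (d : ℤ) ≠ 0 := by exact_mod_cast hd.ne'
  set e : GaussianInt → GaussianInt := fun z => ⟨z.re, (d : ℤ) * z.im⟩ with he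
  have hinj : Function.Injective e := by
    intro a b h
    simp only [he] at h
    injection h with h1 h2
    exact Zsqrtd.ext h1 (mul_left_cancel₀ hd' h2)
  have hfin' : (e ⁻¹' (Function.support c)).Finite := hfin.preimage hinj.injOn
  have hsub : Function.support g ⊆ ↑hfin'.toFinset := by
    intro z hz
    simp only [Set.Finite.coe_toFinset, Set.mem_preimage, Function.mem_support]
    exact hg z hz
  rw [finsum_eq_sum_of_support_subset g hsub]
  rw [← Finset.sum_filter]
  refine Finset.sum_nbij' e (fun z => (⟨z.re, z.im / d⟩ : GaussianInt)) ?_ ?_ ?_ ?_ ?_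
  · intro a ha
    simp only [Set.Finite.mem_toFinset, Set.mem_preimage, Function.mem_support] at ha
    simp only [Finset.mem_filter, Set.Finite.mem_toFinset, Function.mem_support]
    exact ⟨ha, ⟨a.im, rfl⟩⟩
  · intro b hb
    simp only [Finset.mem_filter, Set.Finite.mem_toFinset, Function.mem_support] at hb
    obtain ⟨hb1, hb2⟩ := hb
    simp only [Set.Finite.mem_toFinset, Set.mem_preimage, Function.mem_support, he]
    have : (d : ℤ) * (b.im / d) = b.im := Int.mul_ediv_cancel' hb2
    simpa [this] using hb1
  · intro a _
    have : (d : ℤ) * a.im / d = a.im := by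
      rw [Int.mul_ediv_cancel_left _ hd']
    simp [he, this]
  · intro b hb
    simp only [Finset.mem_filter, Set.Finite.mem_toFinset, Function.mem_support] at hb
    have h4 : (d : ℤ) * (b.im / d) = b.im := Int.mul_ediv_cancel' hb.2
    exact Zsqrtd.ext rfl h4
  · intro a _
    have : (d : ℤ) * a.im / d = a.im := Int.mul_ediv_cancel_left _ hd'
    simp [he, this]

private lemma detSum'_eq (c : GaussianInt → ℂ) (hfin : (Function.support c).Finite)
    (d : ℕ) (hd : 0 < d) (q' : ℕ) :
    detSum' (cdil d c) q'
      = ∑ z₁ ∈ hfin.toFinset, ∑ z₂ ∈ hfin.toFinset,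
          if (d : ℤ) ∣ z₁.im ∧ (d : ℤ) ∣ z₂.im ∧
              ((q' : ℤ) ∣ (z₁.re * (z₂.im / d) - z₂.re * (z₁.im / d)) ∧
                Int.gcd ((z₁.im / d) * (z₂.im / d)) q' = 1)
          then c z₁ * conj (c z₂) else 0 := by
  classical
  rw [detSum']
  rw [reindex_aux c hfin d hd _ ?hg1]
  case hg1 =>
    intro z hz
    by_contra h0
    apply hz
    refine finsum_eq_zero_of_forall_eq_zero fun z₂ => ?_
    have : cdil d c z = 0 := h0
    simp [this]
  refine Finset.sum_congr rfl fun z₁ hz₁ => ?_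
  by_cases h1 : (d : ℤ) ∣ z₁.im
  · simp only [if_pos h1]
    rw [reindex_aux c hfin d hd _ ?hg2]
    case hg2 =>
      intro z hz
      by_contra h0
      apply hz
      have : cdil d c z = 0 := h0
      simp [this]
    refine Finset.sum_congr rfl fun z₂ hz₂ => ?_
    by_cases h2 : (d : ℤ) ∣ z₂.im
    · simp only [if_pos h2]
      have e1 : cdil d c ⟨z₁.re, z₁.im / d⟩ = c z₁ := by
        have : (d : ℤ) * (z₁.im / d) = z₁.im := Int.mul_ediv_cancel' h1
        simp [cdil, this]
      have e2 : cdil d c ⟨z₂.re, z₂.im / d⟩ = c z₂ := by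
        have : (d : ℤ) * (z₂.im / d) = z₂.im := Int.mul_ediv_cancel' h2
        simp [cdil, this]
      simp only [e1, e2]
      by_cases h3 : (q' : ℤ) ∣ (z₁.re * (z₂.im / d) - z₂.re * (z₁.im / d)) ∧
          Int.gcd ((z₁.im / d) * (z₂.im / d)) q' = 1
      · rw [if_pos, if_pos (⟨h1, h2, h3⟩)]; exact h3
      · rw [if_neg, if_neg]
        · rintro ⟨-, -, h⟩; exact h3 h
        · exact h3
    · rw [if_neg h2, if_neg]
      rintro ⟨-, h, -⟩; exact h2 h
  · simp only [if_neg h1]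
    rw [eq_comm]
    refine Finset.sum_eq_zero fun z₂ _ => ?_
    rw [if_neg]
    rintro ⟨h, -, -⟩; exact h1 h

private lemma key_arith (q : ℕ) (hq : 1 ≤ q) (u₁ v₁ u₂ v₂ : ℤ)
    (h₁ : Int.gcd u₁ v₁ = 1) (h₂ : Int.gcd u₂ v₂ = 1) (T : ℂ) :
    (if (q : ℤ) ∣ (u₁ * v₂ - u₂ * v₁) then T else 0)
      = ∑ d ∈ q.divisors,
          if (d : ℤ) ∣ v₁ ∧ (d : ℤ) ∣ v₂ ∧
              (((q / d : ℕ) : ℤ) ∣ (u₁ * (v₂ / d) - u₂ * (v₁ / d)) ∧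
                Int.gcd ((v₁ / d) * (v₂ / d)) ((q / d : ℕ) : ℤ) = 1)
          then T else 0 := by
  classical
  have hq0 : q ≠ 0 := by omega
  -- claim 1: the condition for a divisor `d` implies the global congruence
  have claim1 : ∀ d ∈ q.divisors,
      ((d : ℤ) ∣ v₁ ∧ (d : ℤ) ∣ v₂ ∧
        (((q / d : ℕ) : ℤ) ∣ (u₁ * (v₂ / d) - u₂ * (v₁ / d)) ∧
          Int.gcd ((v₁ / d) * (v₂ / d)) ((q / d : ℕ) : ℤ) = 1)) →
      (q : ℤ) ∣ (u₁ * v₂ - u₂ * v₁) := by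
    rintro d hd ⟨hdv₁, hdv₂, hX, -⟩
    have hdq : d ∣ q := (Nat.mem_divisors.mp hd).1
    have e1 : (d : ℤ) * (v₁ / d) = v₁ := Int.mul_ediv_cancel' hdv₁
    have e2 : (d : ℤ) * (v₂ / d) = v₂ := Int.mul_ediv_cancel' hdv₂
    have key : u₁ * v₂ - u₂ * v₁ = (d : ℤ) * (u₁ * (v₂ / d) - u₂ * (v₁ / d)) := by
      linear_combination u₂ * e1 - u₁ * e2
    have hqd : (q : ℤ) = (d : ℤ) * ((q / d : ℕ) : ℤ) := by
      exact_mod_cast congrArg (Nat.cast : ℕ → ℤ) (Nat.mul_div_cancel' hdq).symm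
    rw [key, hqd]
    exact mul_dvd_mul_left _ hX
  -- claim 2: the divisor is uniquely determined
  have claim2 : ∀ d ∈ q.divisors,
      ((d : ℤ) ∣ v₁ ∧ (d : ℤ) ∣ v₂ ∧
        (((q / d : ℕ) : ℤ) ∣ (u₁ * (v₂ / d) - u₂ * (v₁ / d)) ∧
          Int.gcd ((v₁ / d) * (v₂ / d)) ((q / d : ℕ) : ℤ) = 1)) →
      d = Nat.gcd (Int.gcd v₁ v₂) q := by
    rintro d hd ⟨hdv₁, hdv₂, -, hcop⟩
    have hdq : d ∣ q := (Nat.mem_divisors.mp hd).1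
    have e1 : (d : ℤ) * (v₁ / d) = v₁ := Int.mul_ediv_cancel' hdv₁
    have e2 : (d : ℤ) * (v₂ / d) = v₂ := Int.mul_ediv_cancel' hdv₂
    have eg : Int.gcd v₁ v₂ = d * Int.gcd (v₁ / d) (v₂ / d) := by
      conv_lhs => rw [← e1, ← e2]
      rw [Int.gcd_mul_left]
      simp
    have hqd : q = d * (q / d) := (Nat.mul_div_cancel' hdq).symm
    have hg1 : Nat.gcd (Int.gcd (v₁ / d) (v₂ / d)) (q / d) = 1 := by
      have h1 : Int.gcd (v₁ / d) (v₂ / d) ∣ ((v₁ / d) * (v₂ / d)).natAbs := by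
        rw [Int.natAbs_mul]
        exact Dvd.dvd.mul_right (Nat.gcd_dvd_left _ _) _
      have h2 : Nat.gcd (Int.gcd (v₁ / d) (v₂ / d)) (q / d) ∣
          Int.gcd ((v₁ / d) * (v₂ / d)) ((q / d : ℕ) : ℤ) := by
        have : Int.gcd ((v₁ / d) * (v₂ / d)) ((q / d : ℕ) : ℤ)
            = Nat.gcd ((v₁ / d) * (v₂ / d)).natAbs (q / d) := rfl
        rw [this]
        exact Nat.dvd_gcd ((Nat.gcd_dvd_left _ _).trans h1) (Nat.gcd_dvd_right _ _)
      rw [hcop] at h2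
      exact Nat.dvd_one.mp h2
    have : Nat.gcd (Int.gcd v₁ v₂) q = d := by
      rw [eg]
      conv_lhs => rw [hqd]
      rw [Nat.gcd_mul_left, hg1, mul_one]
    omega
  -- claim 3: the global congruence implies the condition for `d₀ = gcd (gcd v₁ v₂) q`
  have claim3 : (q : ℤ) ∣ (u₁ * v₂ - u₂ * v₁) →
      (((Nat.gcd (Int.gcd v₁ v₂) q : ℕ) : ℤ) ∣ v₁ ∧
        ((Nat.gcd (Int.gcd v₁ v₂) q : ℕ) : ℤ) ∣ v₂ ∧
        (((q / Nat.gcd (Int.gcd v₁ v₂) q : ℕ) : ℤ) ∣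
            (u₁ * (v₂ / Nat.gcd (Int.gcd v₁ v₂) q) - u₂ * (v₁ / Nat.gcd (Int.gcd v₁ v₂) q)) ∧
          Int.gcd ((v₁ / Nat.gcd (Int.gcd v₁ v₂) q) * (v₂ / Nat.gcd (Int.gcd v₁ v₂) q))
            ((q / Nat.gcd (Int.gcd v₁ v₂) q : ℕ) : ℤ) = 1)) := by
    intro hdvd
    set d : ℕ := Nat.gcd (Int.gcd v₁ v₂) q with hdd
    have hdq : d ∣ q := Nat.gcd_dvd_right _ _
    have hd0 : 0 < d := Nat.gcd_pos_of_pos_right _ (by omega)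
    have hd0' : (d : ℤ) ≠ 0 := by exact_mod_cast hd0.ne'
    have hdv₁ : (d : ℤ) ∣ v₁ := by
      have h := Int.natCast_dvd_natCast.mpr (Nat.gcd_dvd_left (Int.gcd v₁ v₂) q)
      exact dvd_trans h (Int.gcd_dvd_left _ _)
    have hdv₂ : (d : ℤ) ∣ v₂ := by
      have h := Int.natCast_dvd_natCast.mpr (Nat.gcd_dvd_left (Int.gcd v₁ v₂) q)
      exact dvd_trans h (Int.gcd_dvd_right _ _)
    have e1 : (d : ℤ) * (v₁ / d) = v₁ := Int.mul_ediv_cancel' hdv₁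
    have e2 : (d : ℤ) * (v₂ / d) = v₂ := Int.mul_ediv_cancel' hdv₂
    have hqd : q = d * (q / d) := (Nat.mul_div_cancel' hdq).symm
    have hq'0 : q / d ≠ 0 := by
      intro h0
      rw [h0, Nat.mul_zero] at hqd
      omega
    have hX : ((q / d : ℕ) : ℤ) ∣ (u₁ * (v₂ / d) - u₂ * (v₁ / d)) := by
      have key : u₁ * v₂ - u₂ * v₁ = (d : ℤ) * (u₁ * (v₂ / d) - u₂ * (v₁ / d)) := by
        linear_combination u₂ * e1 - u₁ * e2
      have h1 : (d : ℤ) * ((q / d : ℕ) : ℤ) ∣ (d : ℤ) * (u₁ * (v₂ / d) - u₂ * (v₁ / d)) := by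
        rw [← key]
        have : (d : ℤ) * ((q / d : ℕ) : ℤ) = ((q : ℕ) : ℤ) := by
          exact_mod_cast congrArg (Nat.cast : ℕ → ℤ) hqd.symm
        rw [this]
        exact hdvd
      exact (mul_dvd_mul_iff_left hd0').mp h1
    refine ⟨hdv₁, hdv₂, hX, ?_⟩
    by_contra hne
    have hk0 : Int.gcd ((v₁ / d) * (v₂ / d)) ((q / d : ℕ) : ℤ) ≠ 0 := by
      intro h0
      have h := Int.gcd_eq_zero_iff.mp h0
      have : ((q / d : ℕ) : ℤ) = 0 := h.2
      exact hq'0 (by exact_mod_cast this)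
    set p : ℕ := (Int.gcd ((v₁ / d) * (v₂ / d)) ((q / d : ℕ) : ℤ)).minFac with hpp
    have hp : p.Prime := Nat.minFac_prime hne
    have hpk : p ∣ Int.gcd ((v₁ / d) * (v₂ / d)) ((q / d : ℕ) : ℤ) := Nat.minFac_dvd _
    have hpq' : p ∣ q / d := by
      have h1 : ((Int.gcd ((v₁ / d) * (v₂ / d)) ((q / d : ℕ) : ℤ) : ℕ) : ℤ) ∣ ((q / d : ℕ) : ℤ) :=
        Int.gcd_dvd_right _ _
      have h2 : (p : ℤ) ∣ ((q / d : ℕ) : ℤ) :=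
        dvd_trans (Int.natCast_dvd_natCast.mpr hpk) h1
      exact_mod_cast h2
    have hpw : (p : ℤ) ∣ (v₁ / d) * (v₂ / d) :=
      dvd_trans (Int.natCast_dvd_natCast.mpr hpk) (Int.gcd_dvd_left _ _)
    have hpprime : Prime (p : ℤ) := Nat.prime_iff_prime_int.mp hp
    have hpX : (p : ℤ) ∣ (u₁ * (v₂ / d) - u₂ * (v₁ / d)) :=
      dvd_trans (Int.natCast_dvd_natCast.mpr hpq') hX
    have hboth : ¬ ((p : ℤ) ∣ (v₁ / d) ∧ (p : ℤ) ∣ (v₂ / d)) := by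
      rintro ⟨ha, hb⟩
      have hv1 : ((d * p : ℕ) : ℤ) ∣ v₁ := by
        rw [← e1]
        push_cast
        exact mul_dvd_mul_left _ ha
      have hv2 : ((d * p : ℕ) : ℤ) ∣ v₂ := by
        rw [← e2]
        push_cast
        exact mul_dvd_mul_left _ hb
      have h1 : (d * p) ∣ Int.gcd v₁ v₂ :=
        Int.natCast_dvd_natCast.mp (Int.dvd_coe_gcd hv1 hv2)
      have h2 : (d * p) ∣ q := by
        conv_rhs => rw [hqd]
        exact Nat.mul_dvd_mul_left d hpq'
      have h3 : d * p ∣ d := hdd ▸ Nat.dvd_gcd h1 h2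
      have h4 : p ∣ 1 := by
        have h3' : d * p ∣ d * 1 := by simpa using h3
        exact (Nat.mul_dvd_mul_iff_left hd0).mp h3'
      exact Nat.Prime.one_lt hp |>.ne' (Nat.dvd_one.mp h4)
    have contra_u : ∀ (u v w : ℤ), Int.gcd u v = 1 → (d : ℤ) * w = v → (p : ℤ) ∣ u →
        (p : ℤ) ∣ w → False := by
      intro u v w hguv hew hu hw
      have hv : (p : ℤ) ∣ v := by
        rw [← hew]
        exact Dvd.dvd.mul_left hw _
      have h5 : (p : ℤ) ∣ ((Int.gcd u v : ℕ) : ℤ) := Int.dvd_coe_gcd hu hv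
      rw [hguv] at h5
      have : p ∣ 1 := by exact_mod_cast h5
      exact Nat.Prime.one_lt hp |>.ne' (Nat.dvd_one.mp this)
    rcases hpprime.dvd_mul.mp hpw with ha | hb
    · have h6 : (p : ℤ) ∣ u₂ * (v₁ / d) := Dvd.dvd.mul_left ha u₂
      have h7 : (p : ℤ) ∣ u₁ * (v₂ / d) := by
        have h8 := dvd_add hpX h6
        simpa using h8
      rcases hpprime.dvd_mul.mp h7 with hu | hw
      · exact contra_u u₁ v₁ (v₁ / d) h₁ e1 hu ha
      · exact hboth ⟨ha, hw⟩
    · have h6 : (p : ℤ) ∣ u₁ * (v₂ / d) := Dvd.dvd.mul_left hb u₁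
      have h7 : (p : ℤ) ∣ u₂ * (v₁ / d) := by
        have h8 := dvd_sub h6 hpX
        simpa using h8
      rcases hpprime.dvd_mul.mp h7 with hu | hw
      · exact contra_u u₂ v₂ (v₂ / d) h₂ e2 hu hb
      · exact hboth ⟨hw, hb⟩
  -- assemble
  by_cases H : (q : ℤ) ∣ (u₁ * v₂ - u₂ * v₁)
  · rw [if_pos H]
    have hP0 := claim3 H
    have hmem : Nat.gcd (Int.gcd v₁ v₂) q ∈ q.divisors :=
      Nat.mem_divisors.mpr ⟨Nat.gcd_dvd_right _ _, hq0⟩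
    have hcongr : ∀ d ∈ q.divisors,
        (if (d : ℤ) ∣ v₁ ∧ (d : ℤ) ∣ v₂ ∧
            (((q / d : ℕ) : ℤ) ∣ (u₁ * (v₂ / d) - u₂ * (v₁ / d)) ∧
              Int.gcd ((v₁ / d) * (v₂ / d)) ((q / d : ℕ) : ℤ) = 1)
          then T else 0)
          = (if d = Nat.gcd (Int.gcd v₁ v₂) q then T else 0) := by
      intro d hd
      by_cases hPd : (d : ℤ) ∣ v₁ ∧ (d : ℤ) ∣ v₂ ∧
          (((q / d : ℕ) : ℤ) ∣ (u₁ * (v₂ / d) - u₂ * (v₁ / d)) ∧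
            Int.gcd ((v₁ / d) * (v₂ / d)) ((q / d : ℕ) : ℤ) = 1)
      · rw [if_pos hPd, if_pos (claim2 d hd hPd)]
      · rw [if_neg hPd, if_neg]
        intro heq
        exact hPd (heq ▸ hP0)
    rw [Finset.sum_congr rfl hcongr,
      Finset.sum_ite_eq' q.divisors (Nat.gcd (Int.gcd v₁ v₂) q) (fun _ => T), if_pos hmem]
  · rw [if_neg H]
    symm
    apply Finset.sum_eq_zero
    intro d hd
    rw [if_neg]
    intro hPd
    exact H (claim1 d hd hPd)

/-- **Decomposition (1.10).** If `c` is finitely supported and supported on primitive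
Gaussian integers (`gcd(u,v) = 1`, `v ≠ 0`), then `S_q(c) = ∑_{d | q} S'_{q/d}(c_d)`. -/
theorem detSum_decomposition (c : GaussianInt → ℂ) (hfin : (Function.support c).Finite)
    (hsupp : ∀ z : GaussianInt, c z ≠ 0 → Int.gcd z.re z.im = 1 ∧ z.im ≠ 0)
    (q : ℕ) (hq : 1 ≤ q) :
    detSum c q = ∑ d ∈ q.divisors, detSum' (cdil d c) (q / d) := by
  classical
  have lhs : detSum c q = ∑ z₁ ∈ hfin.toFinset, ∑ z₂ ∈ hfin.toFinset,
      if (q : ℤ) ∣ (z₁.re * z₂.im - z₂.re * z₁.im) then c z₁ * conj (c z₂) else 0 := by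
    rw [detSum]
    rw [finsum_eq_sum_of_support_subset _ (s := hfin.toFinset) ?h1]
    case h1 =>
      intro z₁ hz₁
      simp only [Set.Finite.coe_toFinset, Function.mem_support]
      by_contra h0
      apply hz₁
      refine finsum_eq_zero_of_forall_eq_zero fun z₂ => ?_
      simp [h0]
    refine Finset.sum_congr rfl fun z₁ _ => ?_
    rw [finsum_eq_sum_of_support_subset _ (s := hfin.toFinset) ?h2]
    case h2 =>
      intro z₂ hz₂
      simp only [Set.Finite.coe_toFinset, Function.mem_support]
      by_contra h0
      apply hz₂
      simp [h0]
  rw [lhs]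
  have rhs : ∀ d ∈ q.divisors, detSum' (cdil d c) (q / d)
      = ∑ z₁ ∈ hfin.toFinset, ∑ z₂ ∈ hfin.toFinset,
          if (d : ℤ) ∣ z₁.im ∧ (d : ℤ) ∣ z₂.im ∧
              (((q / d : ℕ) : ℤ) ∣ (z₁.re * (z₂.im / d) - z₂.re * (z₁.im / d)) ∧
                Int.gcd ((z₁.im / d) * (z₂.im / d)) (((q / d : ℕ) : ℤ)) = 1)
          then c z₁ * conj (c z₂) else 0 :=
    fun d hd => detSum'_eq c hfin d (Nat.pos_of_mem_divisors hd) (q / d)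
  rw [Finset.sum_congr rfl rhs]
  conv_rhs => rw [Finset.sum_comm]
  refine Finset.sum_congr rfl fun z₁ hz₁ => ?_
  conv_rhs => rw [Finset.sum_comm]
  refine Finset.sum_congr rfl fun z₂ hz₂ => ?_
  simp only [Set.Finite.mem_toFinset, Function.mem_support] at hz₁ hz₂
  exact key_arith q hq z₁.re z₁.im z₂.re z₂.im (hsupp z₁ hz₁).1 (hsupp z₂ hz₂).1 _
end
end

section
/- There is an absolute constant C such that for every integer q ≥ 1 and all reals U ≥ 1, Y ≥ 1, the number of quadruples (u₁, w₁, u₂, w₂) of integers satisfying 1 ≤ u₁, u₂ ≤ U, 1 ≤ w₁, w₂ ≤ Y, gcd(u₁, w₁) = gcd(u₂, w₂) = 1, and u₁w₂ ≡ u₂w₁ (mod q), is at most C·(1 + (U·Y/q)·(log(2UY))³)·U·Y. -/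
open scoped Classical

open Finset

set_option maxHeartbeats 1000000

namespace QC

variable (a b : ℤ)

noncomputable def P : Finset (ℤ × ℤ) := Finset.Icc 1 a ×ˢ Finset.Icc 1 b

noncomputable def r (n : ℤ) : ℕ := ((P a b).filter fun p => p.1 * p.2 = n).card

noncomputable def S (d : ℤ) : Finset ((ℤ × ℤ) × ℤ × ℤ) :=
  ((P a b) ×ˢ (P a b)).filter fun z => z.1.1 * z.1.2 - z.2.1 * z.2.2 = d

noncomputable def T (N : ℤ) : Finset (ℤ × ℤ × ℤ × ℤ) :=
  (Finset.Icc 1 N ×ˢ Finset.Icc 1 N ×ˢ Finset.Icc 1 N ×ˢ Finset.Icc 1 N).filter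
    fun x => x.1 * x.2.1 * x.2.2.1 * x.2.2.2 ≤ N

variable {a b}

lemma mem_P {p : ℤ × ℤ} (hp : p ∈ P a b) : 1 ≤ p.1 ∧ p.1 ≤ a ∧ 1 ≤ p.2 ∧ p.2 ≤ b := by
  simp only [P, Finset.mem_product, Finset.mem_Icc] at hp
  tauto

lemma prod_mem_of_mem_P (ha : 1 ≤ a) (hb : 1 ≤ b) {p : ℤ × ℤ} (hp : p ∈ P a b) :
    1 ≤ p.1 * p.2 ∧ p.1 * p.2 ≤ a * b := by
  obtain ⟨h1, h2, h3, h4⟩ := mem_P hp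
  constructor
  · nlinarith
  · nlinarith

lemma r_eq_zero (ha : 1 ≤ a) (hb : 1 ≤ b) {n : ℤ} (hn : n ∉ Finset.Icc 1 (a * b)) :
    r a b n = 0 := by
  rw [r, Finset.card_eq_zero, Finset.filter_eq_empty_iff]
  intro p hp hpn
  exact hn (by rw [Finset.mem_Icc, ← hpn]; exact ⟨(prod_mem_of_mem_P ha hb hp).1,
    (prod_mem_of_mem_P ha hb hp).2⟩)

/-- Lemma A -/
lemma card_S (ha : 1 ≤ a) (hb : 1 ≤ b) (d : ℤ) :
    (S a b d).card = ∑ n ∈ Finset.Icc 1 (a * b), r a b n * r a b (n - d) := by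
  rw [Finset.card_eq_sum_card_fiberwise (f := fun z => z.1.1 * z.1.2)
    (t := Finset.Icc 1 (a * b)) (fun z hz => by
      rw [Finset.mem_coe, S, Finset.mem_filter, Finset.mem_product] at hz
      rw [Finset.mem_coe, Finset.mem_Icc]
      exact ⟨(prod_mem_of_mem_P ha hb hz.1.1).1, (prod_mem_of_mem_P ha hb hz.1.1).2⟩)]
  refine Finset.sum_congr rfl fun n hn => ?_
  rw [S, Finset.filter_filter]
  have : ((P a b ×ˢ P a b).filter fun z =>
      (z.1.1 * z.1.2 - z.2.1 * z.2.2 = d) ∧ z.1.1 * z.1.2 = n)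
      = (P a b ×ˢ P a b).filter fun z =>
      (fun p : ℤ × ℤ => p.1 * p.2 = n) z.1 ∧ (fun p : ℤ × ℤ => p.1 * p.2 = n - d) z.2 := by
    apply Finset.filter_congr
    intro z _
    constructor
    · rintro ⟨h1, h2⟩; exact ⟨h2, by omega⟩
    · rintro ⟨h1, h2⟩; exact ⟨by omega, h1⟩
  rw [this, Finset.filter_product (p := fun p : ℤ × ℤ => p.1 * p.2 = n)
    (q := fun p : ℤ × ℤ => p.1 * p.2 = n - d), Finset.card_product, r, r]

/-- shifted sum bound -/
lemma sum_shift (ha : 1 ≤ a) (hb : 1 ≤ b) (d : ℤ) :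
    ∑ n ∈ Finset.Icc 1 (a * b), r a b (n - d) ^ 2 ≤
      ∑ n ∈ Finset.Icc 1 (a * b), r a b n ^ 2 := by
  classical
  set I := Finset.Icc (1 : ℤ) (a * b)
  have h1 : ∑ n ∈ I, r a b (n - d) ^ 2 = ∑ m ∈ I.image (fun n => n - d), r a b m ^ 2 := by
    rw [Finset.sum_image (by intro x _ y _ h; have h' : x - d = y - d := h; omega)]
  rw [h1]
  rw [← Finset.sum_filter_add_sum_filter_not (I.image (fun n => n - d)) (fun m => m ∈ I)]
  have h2 : ∑ m ∈ (I.image (fun n => n - d)).filter (fun m => ¬ m ∈ I), r a b m ^ 2 = 0 := by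
    apply Finset.sum_eq_zero
    intro m hm
    rw [Finset.mem_filter] at hm
    rw [r_eq_zero ha hb hm.2]
    ring
  rw [h2, add_zero]
  apply Finset.sum_le_sum_of_subset
  intro m hm
  exact (Finset.mem_filter.mp hm).2

/-- Lemma C : card S d ≤ card S 0 -/
lemma card_S_le (ha : 1 ≤ a) (hb : 1 ≤ b) (d : ℤ) : (S a b d).card ≤ (S a b 0).card := by
  have h0 : (S a b 0).card = ∑ n ∈ Finset.Icc 1 (a * b), r a b n ^ 2 := by
    rw [card_S ha hb]
    refine Finset.sum_congr rfl fun n _ => ?_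
    rw [sub_zero, sq]
  have hd := card_S ha hb (a := a) (b := b) d
  have key : 2 * (S a b d).card ≤ 2 * (S a b 0).card := by
    rw [hd, h0, Finset.mul_sum, Finset.mul_sum]
    calc ∑ n ∈ Finset.Icc 1 (a * b), 2 * (r a b n * r a b (n - d))
        ≤ ∑ n ∈ Finset.Icc 1 (a * b), (r a b n ^ 2 + r a b (n - d) ^ 2) := by
          apply Finset.sum_le_sum
          intro n _
          have := two_mul_le_add_sq (r a b n) (r a b (n - d))
          simpa [mul_assoc] using this
      _ = ∑ n ∈ Finset.Icc 1 (a * b), r a b n ^ 2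
            + ∑ n ∈ Finset.Icc 1 (a * b), r a b (n - d) ^ 2 := Finset.sum_add_distrib
      _ ≤ ∑ n ∈ Finset.Icc 1 (a * b), r a b n ^ 2
            + ∑ n ∈ Finset.Icc 1 (a * b), r a b n ^ 2 := by
          have := sum_shift ha hb (a := a) (b := b) d
          omega
      _ = ∑ n ∈ Finset.Icc 1 (a * b), 2 * r a b n ^ 2 := by
          rw [← Finset.sum_add_distrib]
          refine Finset.sum_congr rfl fun n _ => ?_
          ring
  omega

/-- key multiplicative structure lemma -/
lemma key_struct {A B c e : ℤ} (hA : 0 < A) (hB : 0 < B) (hc : 0 < c) (he : 0 < e)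
    (h : A * B = c * e) :
    ∃ g k l m : ℤ, 0 < g ∧ 0 < k ∧ 0 < l ∧ 0 < m ∧
      g = (Int.gcd A c : ℤ) ∧ A = g * k ∧ c = g * l ∧ B = l * m ∧ e = k * m := by
  set g : ℤ := (Int.gcd A c : ℤ) with hg
  have hgpos : 0 < g := by
    have : A.gcd c ≠ 0 := by
      simp [Int.gcd_eq_zero_iff]
      omega
    positivity
  have hgA : g ∣ A := Int.gcd_dvd_left A c
  have hgc : g ∣ c := Int.gcd_dvd_right A c
  obtain ⟨k, hk⟩ := hgA
  obtain ⟨l, hl⟩ := hgc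
  have hkpos : 0 < k := by nlinarith
  have hlpos : 0 < l := by nlinarith
  have hco : Int.gcd k l = 1 := by
    have hgn : 0 < A.gcd c := by
      rcases Nat.eq_zero_or_pos (A.gcd c) with h0 | h0
      · rw [Int.gcd_eq_zero_iff] at h0; omega
      · exact h0
    have h1 := Int.gcd_div_gcd_div_gcd hgn
    have hdiv1 : A / g = k := by rw [hk]; exact Int.mul_ediv_cancel_left _ (ne_of_gt hgpos)
    have hdiv2 : c / g = l := by rw [hl]; exact Int.mul_ediv_cancel_left _ (ne_of_gt hgpos)
    rwa [← hg, hdiv1, hdiv2] at h1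
  have hkb : k * B = l * e := by
    have : g * (k * B) = g * (l * e) := by rw [← mul_assoc, ← mul_assoc, ← hk, ← hl]; exact h
    exact mul_left_cancel₀ (ne_of_gt hgpos) this
  have hlB : l ∣ B := by
    have hcop : IsCoprime l k := by
      rw [Int.isCoprime_iff_gcd_eq_one, Int.gcd_comm]
      exact hco
    exact hcop.dvd_of_dvd_mul_left ⟨e, hkb⟩
  obtain ⟨m, hm⟩ := hlB
  have hmpos : 0 < m := by nlinarith
  have hekm : e = k * m := by
    have : l * e = l * (k * m) := by rw [← hkb, hm]; ring
    exact mul_left_cancel₀ (ne_of_gt hlpos) this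
  exact ⟨g, k, l, m, hgpos, hkpos, hlpos, hmpos, rfl, hk, hl, hm, hekm⟩

/-- Lemma D -/
lemma card_S0_le_T (ha : 1 ≤ a) (hb : 1 ≤ b) : (S a b 0).card ≤ (T (a * b)).card := by
  classical
  set N := a * b with hN
  apply Finset.card_le_card_of_injOn (fun z =>
    ((Int.gcd z.1.1 z.2.1 : ℤ), z.1.1 / (Int.gcd z.1.1 z.2.1 : ℤ),
      z.2.1 / (Int.gcd z.1.1 z.2.1 : ℤ),
      z.1.2 / (z.2.1 / (Int.gcd z.1.1 z.2.1 : ℤ))))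
  · intro z hz
    rw [Finset.mem_coe, S, Finset.mem_filter, Finset.mem_product] at hz
    obtain ⟨⟨hz1, hz2⟩, hz3⟩ := hz
    obtain ⟨hA1, hA2, hB1, hB2⟩ := mem_P hz1
    obtain ⟨hc1, hc2, he1, he2⟩ := mem_P hz2
    have heq : z.1.1 * z.1.2 = z.2.1 * z.2.2 := by omega
    obtain ⟨g, k, l, m, hg, hk, hl, hm, hgdef, hA, hc, hB, he⟩ :=
      key_struct (by omega) (by omega) (by omega) (by omega) heq
    have hgk : z.1.1 / g = k := by rw [hA]; exact Int.mul_ediv_cancel_left _ (ne_of_gt hg)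
    have hgl : z.2.1 / g = l := by rw [hc]; exact Int.mul_ediv_cancel_left _ (ne_of_gt hg)
    have hlm : z.1.2 / l = m := by rw [hB]; exact Int.mul_ediv_cancel_left _ (ne_of_gt hl)
    have hprod : g * k * l * m = z.1.1 * z.1.2 := by rw [hA, hB]; ring
    have haN : a ≤ N := by rw [hN]; nlinarith
    have hbN : b ≤ N := by rw [hN]; nlinarith
    have hgle : g ≤ z.1.1 := Int.le_of_dvd (by omega) ⟨k, hA⟩
    have hkle : k ≤ z.1.1 := Int.le_of_dvd (by omega) ⟨g, by rw [hA]; ring⟩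
    have hlle : l ≤ z.2.1 := Int.le_of_dvd (by omega) ⟨g, by rw [hc]; ring⟩
    have hmle : m ≤ z.1.2 := Int.le_of_dvd (by omega) ⟨l, by rw [hB]; ring⟩
    have hprodle : g * k * l * m ≤ N := by
      rw [hN, hprod]
      exact mul_le_mul hA2 hB2 (by omega) (by omega)
    rw [Finset.mem_coe, T, Finset.mem_filter, Finset.mem_product, Finset.mem_product, Finset.mem_product]
    simp only [← hgdef, hgk, hgl, hlm]
    refine ⟨⟨?_, ?_, ?_, ?_⟩, hprodle⟩ <;> rw [Finset.mem_Icc] <;> omega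
  · intro z hz z' hz' hzz
    simp only [Finset.mem_coe, S, Finset.mem_filter, Finset.mem_product] at hz hz'
    obtain ⟨⟨hz1, hz2⟩, hz3⟩ := hz
    obtain ⟨⟨hz1', hz2'⟩, hz3'⟩ := hz'
    obtain ⟨hA1, hA2, hB1, hB2⟩ := mem_P hz1
    obtain ⟨hc1, hc2, he1, he2⟩ := mem_P hz2
    obtain ⟨hA1', hA2', hB1', hB2'⟩ := mem_P hz1'
    obtain ⟨hc1', hc2', he1', he2'⟩ := mem_P hz2'
    obtain ⟨g, k, l, m, hg, hk, hl, hm, hgdef, hA, hc, hB, he⟩ :=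
      key_struct (A := z.1.1) (B := z.1.2) (c := z.2.1) (e := z.2.2)
        (by omega) (by omega) (by omega) (by omega) (by omega)
    obtain ⟨g', k', l', m', hg', hk', hl', hm', hgdef', hA', hc', hB', he'⟩ :=
      key_struct (A := z'.1.1) (B := z'.1.2) (c := z'.2.1) (e := z'.2.2)
        (by omega) (by omega) (by omega) (by omega) (by omega)
    have hgk : z.1.1 / g = k := by rw [hA]; exact Int.mul_ediv_cancel_left _ (ne_of_gt hg)
    have hgl : z.2.1 / g = l := by rw [hc]; exact Int.mul_ediv_cancel_left _ (ne_of_gt hg)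
    have hlm : z.1.2 / l = m := by rw [hB]; exact Int.mul_ediv_cancel_left _ (ne_of_gt hl)
    have hgk' : z'.1.1 / g' = k' := by rw [hA']; exact Int.mul_ediv_cancel_left _ (ne_of_gt hg')
    have hgl' : z'.2.1 / g' = l' := by rw [hc']; exact Int.mul_ediv_cancel_left _ (ne_of_gt hg')
    have hlm' : z'.1.2 / l' = m' := by rw [hB']; exact Int.mul_ediv_cancel_left _ (ne_of_gt hl')
    simp only [Prod.ext_iff, ← hgdef, ← hgdef', hgk, hgl, hlm, hgk', hgl', hlm'] at hzz
    obtain ⟨e1, e2, e3, e4⟩ := hzz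
    have : z.1.1 = z'.1.1 := by rw [hA, hA', e1, e2]
    have : z.1.2 = z'.1.2 := by rw [hB, hB', e3, e4]
    have : z.2.1 = z'.2.1 := by rw [hc, hc', e1, e3]
    have : z.2.2 = z'.2.2 := by rw [he, he', e2, e4]
    ext <;> assumption

lemma sum_triple (s : Finset ℤ) (f : ℤ → ℝ) :
    ∑ w ∈ s ×ˢ s ×ˢ s, f w.1 * (f w.2.1 * f w.2.2) = (∑ x ∈ s, f x) ^ 3 := by
  rw [Finset.sum_product]
  have inner : ∑ y ∈ s ×ˢ s, f y.1 * f y.2 = (∑ x ∈ s, f x) * (∑ x ∈ s, f x) := by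
    rw [Finset.sum_mul_sum, Finset.sum_product]
  calc ∑ x ∈ s, ∑ y ∈ s ×ˢ s, f x * (f y.1 * f y.2)
      = ∑ x ∈ s, f x * ∑ y ∈ s ×ˢ s, f y.1 * f y.2 := by
        refine Finset.sum_congr rfl fun x _ => ?_
        rw [Finset.mul_sum]
    _ = (∑ x ∈ s, f x) ^ 3 := by
        rw [inner, ← Finset.sum_mul]
        ring

lemma sum_inv_le (N : ℤ) (hN : 1 ≤ N) :
    ∑ g ∈ Finset.Icc (1 : ℤ) N, 1 / (g : ℝ) ≤ 1 + Real.log N := by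
  have h1 : ∑ g ∈ Finset.Icc (1 : ℤ) N, 1 / (g : ℝ)
      = ∑ i ∈ Finset.range N.toNat, 1 / ((i : ℝ) + 1) := by
    refine Finset.sum_nbij' (fun g => (g - 1).toNat) (fun i => (i : ℤ) + 1) ?_ ?_ ?_ ?_ ?_
    · intro g hg
      rw [Finset.mem_Icc] at hg
      rw [Finset.mem_range]
      omega
    · intro i hi
      rw [Finset.mem_range] at hi
      rw [Finset.mem_Icc]
      omega
    · intro g hg
      rw [Finset.mem_Icc] at hg
      omega
    · intro i _
      omega
    · intro g hg
      rw [Finset.mem_Icc] at hg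
      have : ((g - 1).toNat : ℝ) = (g : ℝ) - 1 := by
        have : ((g - 1).toNat : ℤ) = g - 1 := Int.toNat_of_nonneg (by omega)
        exact_mod_cast this
      rw [this]
      ring_nf
  rw [h1]
  have h2 : (∑ i ∈ Finset.range N.toNat, 1 / ((i : ℝ) + 1)) = (harmonic N.toNat : ℝ) := by
    rw [harmonic]
    push_cast
    refine Finset.sum_congr rfl fun i _ => ?_
    rw [one_div]
  rw [h2]
  have h3 := harmonic_le_one_add_log N.toNat
  have h4 : ((N.toNat : ℕ) : ℝ) = (N : ℝ) := by
    have : ((N.toNat : ℕ) : ℤ) = N := Int.toNat_of_nonneg (by omega)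
    exact_mod_cast this
  rw [h4] at h3
  exact h3

/-- Lemma E -/
lemma card_T_le (N : ℤ) (hN : 1 ≤ N) :
    ((T N).card : ℝ) ≤ (N : ℝ) * (1 + Real.log N) ^ 3 := by
  classical
  set s := Finset.Icc (1 : ℤ) N with hs
  have h1 : (T N).card = ∑ w ∈ s ×ˢ s ×ˢ s,
      ((T N).filter fun z => (z.1, z.2.1, z.2.2.1) = w).card := by
    apply Finset.card_eq_sum_card_fiberwise
    intro z hz
    rw [Finset.mem_coe, T, Finset.mem_filter, Finset.mem_product, Finset.mem_product, Finset.mem_product] at hz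
    rw [Finset.mem_coe, Finset.mem_product, Finset.mem_product]
    exact ⟨hz.1.1, hz.1.2.1, hz.1.2.2.1⟩
  have h2 : ∀ w ∈ s ×ˢ s ×ˢ s,
      (((T N).filter fun z => (z.1, z.2.1, z.2.2.1) = w).card : ℝ)
        ≤ (N : ℝ) * (1 / (w.1 : ℝ)) * (1 / (w.2.1 : ℝ) * (1 / (w.2.2 : ℝ))) := by
    intro w hw
    rw [Finset.mem_product, Finset.mem_product, hs, Finset.mem_Icc, Finset.mem_Icc,
      Finset.mem_Icc] at hw
    obtain ⟨⟨hw1, hw2⟩, ⟨hw3, hw4⟩, hw5, hw6⟩ := hw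
    set c : ℤ := w.1 * w.2.1 * w.2.2 with hc
    have hcpos : 0 < c := by positivity
    have step1 : ((T N).filter fun z => (z.1, z.2.1, z.2.2.1) = w).card
        ≤ (Finset.Icc (1 : ℤ) (N / c)).card := by
      apply Finset.card_le_card_of_injOn (fun z => z.2.2.2)
      · intro z hz
        rw [Finset.mem_coe, Finset.mem_filter, T, Finset.mem_filter, Finset.mem_product, Finset.mem_product,
          Finset.mem_product] at hz
        obtain ⟨⟨⟨_, _, _, hm⟩, hle⟩, heqw⟩ := hz
        rw [Finset.mem_Icc] at hm
        rw [Finset.mem_coe, Finset.mem_Icc]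
        have hz1 : z.1 = w.1 := congrArg Prod.fst heqw
        have hz2 : z.2.1 = w.2.1 := congrArg (fun p => p.2.1) heqw
        have hz3 : z.2.2.1 = w.2.2 := congrArg (fun p => p.2.2) heqw
        refine ⟨hm.1, ?_⟩
        rw [Int.le_ediv_iff_mul_le hcpos]
        calc z.2.2.2 * c = z.1 * z.2.1 * z.2.2.1 * z.2.2.2 := by
              rw [hz1, hz2, hz3, hc]; ring
          _ ≤ N := hle
      · intro z hz z' hz' hzz
        simp only [Finset.coe_filter, Set.mem_setOf_eq] at hz hz'
        have h1 := hz.2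
        have h1' := hz'.2
        have e1 : z.1 = z'.1 := by rw [congrArg Prod.fst h1, congrArg Prod.fst h1']
        have e2 : z.2.1 = z'.2.1 := by
          rw [show z.2.1 = w.2.1 from congrArg (fun p => p.2.1) h1,
            show z'.2.1 = w.2.1 from congrArg (fun p => p.2.1) h1']
        have e3 : z.2.2.1 = z'.2.2.1 := by
          rw [show z.2.2.1 = w.2.2 from congrArg (fun p => p.2.2) h1,
            show z'.2.2.1 = w.2.2 from congrArg (fun p => p.2.2) h1']
        ext
        · exact e1
        · exact e2
        · exact e3
        · exact hzz
    have step2 : ((Finset.Icc (1 : ℤ) (N / c)).card : ℝ) ≤ (N : ℝ) / (c : ℝ) := by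
      rw [Int.card_Icc]
      have ht : (0 : ℤ) ≤ N / c := Int.ediv_nonneg (by omega) (le_of_lt hcpos)
      have h5 : ((N / c + 1 - 1).toNat : ℝ) = ((N / c : ℤ) : ℝ) := by
        have : ((N / c + 1 - 1).toNat : ℤ) = N / c := by omega
        exact_mod_cast this
      rw [h5]
      rw [le_div_iff₀ (by exact_mod_cast hcpos)]
      have := Int.ediv_mul_le N (ne_of_gt hcpos)
      exact_mod_cast this
    have step3 : (N : ℝ) / (c : ℝ)
        = (N : ℝ) * (1 / (w.1 : ℝ)) * (1 / (w.2.1 : ℝ) * (1 / (w.2.2 : ℝ))) := by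
      rw [hc]
      push_cast
      have : (w.1 : ℝ) ≠ 0 := by exact_mod_cast (by omega : w.1 ≠ 0)
      have : (w.2.1 : ℝ) ≠ 0 := by exact_mod_cast (by omega : w.2.1 ≠ 0)
      have : (w.2.2 : ℝ) ≠ 0 := by exact_mod_cast (by omega : w.2.2 ≠ 0)
      field_simp
    calc (((T N).filter fun z => (z.1, z.2.1, z.2.2.1) = w).card : ℝ)
        ≤ ((Finset.Icc (1 : ℤ) (N / c)).card : ℝ) := by exact_mod_cast step1
      _ ≤ (N : ℝ) / (c : ℝ) := step2
      _ = _ := step3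
  have hsum : ((T N).card : ℝ)
      ≤ ∑ w ∈ s ×ˢ s ×ˢ s,
          (N : ℝ) * (1 / (w.1 : ℝ)) * (1 / (w.2.1 : ℝ) * (1 / (w.2.2 : ℝ))) := by
    rw [h1]
    push_cast
    exact Finset.sum_le_sum h2
  have heq : ∑ w ∈ s ×ˢ s ×ˢ s,
      (N : ℝ) * (1 / (w.1 : ℝ)) * (1 / (w.2.1 : ℝ) * (1 / (w.2.2 : ℝ)))
      = (N : ℝ) * (∑ g ∈ s, 1 / (g : ℝ)) ^ 3 := by
    have := sum_triple s (fun g => 1 / (g : ℝ))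
    calc ∑ w ∈ s ×ˢ s ×ˢ s, (N : ℝ) * (1 / (w.1 : ℝ)) * (1 / (w.2.1 : ℝ) * (1 / (w.2.2 : ℝ)))
        = ∑ w ∈ s ×ˢ s ×ˢ s, (N : ℝ) *
            ((1 / (w.1 : ℝ)) * (1 / (w.2.1 : ℝ) * (1 / (w.2.2 : ℝ)))) := by
          refine Finset.sum_congr rfl fun w _ => by ring
      _ = (N : ℝ) * ∑ w ∈ s ×ˢ s ×ˢ s,
            (1 / (w.1 : ℝ)) * (1 / (w.2.1 : ℝ) * (1 / (w.2.2 : ℝ))) := by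
          rw [Finset.mul_sum]
      _ = (N : ℝ) * (∑ g ∈ s, 1 / (g : ℝ)) ^ 3 := by rw [this]
  rw [heq] at hsum
  refine hsum.trans ?_
  have hlog := sum_inv_le N hN
  have h0 : (0 : ℝ) ≤ ∑ g ∈ s, 1 / (g : ℝ) := by
    apply Finset.sum_nonneg
    intro g hg
    rw [hs, Finset.mem_Icc] at hg
    have : (0 : ℝ) < (g : ℝ) := by exact_mod_cast (by omega : (0:ℤ) < g)
    positivity
  have hN0 : (0 : ℝ) ≤ (N : ℝ) := by exact_mod_cast (by omega : (0:ℤ) ≤ N)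
  exact mul_le_mul_of_nonneg_left (pow_le_pow_left₀ h0 hlog 3) hN0

/-- diagonal rigidity -/
lemma diag {u₁ w₁ u₂ w₂ : ℤ} (hu₁ : 0 < u₁) (hw₁ : 0 < w₁) (hu₂ : 0 < u₂) (hw₂ : 0 < w₂)
    (hg1 : Int.gcd u₁ w₁ = 1) (hg2 : Int.gcd u₂ w₂ = 1) (h : u₁ * w₂ = u₂ * w₁) :
    u₂ = u₁ ∧ w₂ = w₁ := by
  have hco1 : IsCoprime u₁ w₁ := Int.isCoprime_iff_gcd_eq_one.mpr hg1
  have hco2 : IsCoprime u₂ w₂ := Int.isCoprime_iff_gcd_eq_one.mpr hg2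
  have hd1 : u₁ ∣ u₂ := hco1.dvd_of_dvd_mul_right ⟨w₂, h.symm⟩
  have hd2 : u₂ ∣ u₁ := hco2.dvd_of_dvd_mul_right ⟨w₁, h⟩
  have hu : u₁ = u₂ := le_antisymm (Int.le_of_dvd hu₂ hd1) (Int.le_of_dvd hu₁ hd2)
  refine ⟨hu.symm, ?_⟩
  have : u₁ * w₂ = u₁ * w₁ := by rw [h, hu]
  exact mul_left_cancel₀ (by omega) this

end QC

/-- The finset of quadruples `(u₁, w₁, u₂, w₂)` with `1 ≤ u₁, u₂ ≤ U`, `1 ≤ w₁, w₂ ≤ Y`,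
`gcd(u₁,w₁) = gcd(u₂,w₂) = 1` and `u₁w₂ ≡ u₂w₁ (mod q)`. -/
noncomputable def quadruples (q : ℕ) (U Y : ℝ) : Finset (ℤ × ℤ × ℤ × ℤ) :=
  (Finset.Icc (1 : ℤ) ⌊U⌋ ×ˢ Finset.Icc (1 : ℤ) ⌊Y⌋ ×ˢ
      Finset.Icc (1 : ℤ) ⌊U⌋ ×ˢ Finset.Icc (1 : ℤ) ⌊Y⌋).filter
    fun x : ℤ × ℤ × ℤ × ℤ =>
      Int.gcd x.1 x.2.1 = 1 ∧ Int.gcd x.2.2.1 x.2.2.2 = 1 ∧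
        (q : ℤ) ∣ x.1 * x.2.2.2 - x.2.2.1 * x.2.1

open QC

/-- **The trivial quadruple count.** There is an absolute constant `C` such that for every
`q ≥ 1` and all `U, Y ≥ 1` the number of such quadruples is at most
`C (1 + (UY/q)(log 2UY)³) UY`. -/
theorem quadruple_count :
    ∃ C : ℝ, ∀ (q : ℕ), 1 ≤ q → ∀ (U Y : ℝ), 1 ≤ U → 1 ≤ Y →
      ((quadruples q U Y).card : ℝ)
        ≤ C * (1 + U * Y / (q : ℝ) * Real.log (2 * U * Y) ^ (3 : ℕ)) * (U * Y) := by
  classical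
  refine ⟨7, fun q hq U Y hU hY => ?_⟩
  set a : ℤ := ⌊U⌋ with hadef
  set b : ℤ := ⌊Y⌋ with hbdef
  have ha : 1 ≤ a := Int.le_floor.mpr (by exact_mod_cast hU)
  have hb : 1 ≤ b := Int.le_floor.mpr (by exact_mod_cast hY)
  set N : ℤ := a * b with hNdef
  have hN : 1 ≤ N := by nlinarith
  have hqz : (1 : ℤ) ≤ (q : ℤ) := by exact_mod_cast hq
  -- membership facts for quadruples
  have hmemq : ∀ x ∈ quadruples q U Y,
      (1 ≤ x.1 ∧ x.1 ≤ a) ∧ (1 ≤ x.2.1 ∧ x.2.1 ≤ b) ∧ (1 ≤ x.2.2.1 ∧ x.2.2.1 ≤ a) ∧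
        (1 ≤ x.2.2.2 ∧ x.2.2.2 ≤ b) ∧ Int.gcd x.1 x.2.1 = 1 ∧ Int.gcd x.2.2.1 x.2.2.2 = 1 ∧
        (q : ℤ) ∣ x.1 * x.2.2.2 - x.2.2.1 * x.2.1 := by
    intro x hx
    rw [quadruples, Finset.mem_filter, Finset.mem_product, Finset.mem_product,
      Finset.mem_product] at hx
    obtain ⟨⟨h1, h2, h3, h4⟩, h5, h6, h7⟩ := hx
    rw [Finset.mem_Icc] at h1 h2 h3 h4
    exact ⟨h1, h2, h3, h4, h5, h6, h7⟩
  set f : ℤ × ℤ × ℤ × ℤ → ℤ := fun x => x.1 * x.2.2.2 - x.2.2.1 * x.2.1 with hf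
  set Dset : Finset ℤ := (Finset.Icc (1 - N) (N - 1)).filter (fun d => (q : ℤ) ∣ d) with hD
  have hmap : ∀ x ∈ quadruples q U Y, f x ∈ Dset := by
    intro x hx
    obtain ⟨⟨h1, h2⟩, ⟨h3, h4⟩, ⟨h5, h6⟩, ⟨h7, h8⟩, h9, h10, h11⟩ := hmemq x hx
    rw [hD, Finset.mem_filter, Finset.mem_Icc]
    have hfx : f x = x.1 * x.2.2.2 - x.2.2.1 * x.2.1 := rfl
    refine ⟨⟨?_, ?_⟩, h11⟩
    · have p1 : x.1 * x.2.2.2 ≥ 1 := by nlinarith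
      have p2 : x.2.2.1 * x.2.1 ≤ N := by rw [hNdef]; nlinarith
      omega
    · have p1 : x.1 * x.2.2.2 ≤ N := by rw [hNdef]; nlinarith
      have p2 : x.2.2.1 * x.2.1 ≥ 1 := by nlinarith
      omega
  have hcardsum := Finset.card_eq_sum_card_fiberwise hmap
  -- the zero fiber
  have hfib0 : ((quadruples q U Y).filter fun x => f x = 0).card ≤ (P a b).card := by
    apply Finset.card_le_card_of_injOn (fun x => (x.1, x.2.1))
    · intro x hx
      rw [Finset.mem_coe, Finset.mem_filter] at hx
      obtain ⟨⟨h1, h2⟩, ⟨h3, h4⟩, _⟩ := hmemq x hx.1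
      rw [Finset.mem_coe, P, Finset.mem_product, Finset.mem_Icc, Finset.mem_Icc]
      exact ⟨⟨h1, h2⟩, h3, h4⟩
    · intro x hx x' hx' hxx
      simp only [Finset.coe_filter, Set.mem_setOf_eq] at hx hx'
      obtain ⟨⟨h1, h2⟩, ⟨h3, h4⟩, ⟨h5, h6⟩, ⟨h7, h8⟩, h9, h10, h11⟩ := hmemq x hx.1
      obtain ⟨⟨h1', h2'⟩, ⟨h3', h4'⟩, ⟨h5', h6'⟩, ⟨h7', h8'⟩, h9', h10', h11'⟩ := hmemq x' hx'.1
      have hfx : x.1 * x.2.2.2 = x.2.2.1 * x.2.1 := by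
        have := hx.2; rw [hf] at this; dsimp only at this; omega
      have hfx' : x'.1 * x'.2.2.2 = x'.2.2.1 * x'.2.1 := by
        have := hx'.2; rw [hf] at this; dsimp only at this; omega
      obtain ⟨hu, hw⟩ := diag (by omega) (by omega) (by omega) (by omega) h9 h10 hfx
      obtain ⟨hu', hw'⟩ := diag (by omega) (by omega) (by omega) (by omega) h9' h10' hfx'
      simp only [Prod.mk.injEq] at hxx
      obtain ⟨e1, e2⟩ := hxx
      ext
      · exact e1
      · exact e2
      · rw [hu, hu', e1]
      · rw [hw, hw', e2]
  -- general fibers into S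
  have hfibd : ∀ d : ℤ, ((quadruples q U Y).filter fun x => f x = d).card ≤ (S a b d).card := by
    intro d
    apply Finset.card_le_card_of_injOn (fun x => ((x.1, x.2.2.2), (x.2.2.1, x.2.1)))
    · intro x hx
      rw [Finset.mem_coe, Finset.mem_filter] at hx
      obtain ⟨⟨h1, h2⟩, ⟨h3, h4⟩, ⟨h5, h6⟩, ⟨h7, h8⟩, _⟩ := hmemq x hx.1
      rw [Finset.mem_coe, S, Finset.mem_filter, Finset.mem_product]
      refine ⟨⟨?_, ?_⟩, ?_⟩
      · rw [P, Finset.mem_product, Finset.mem_Icc, Finset.mem_Icc]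
        exact ⟨⟨h1, h2⟩, h7, h8⟩
      · rw [P, Finset.mem_product, Finset.mem_Icc, Finset.mem_Icc]
        exact ⟨⟨h5, h6⟩, h3, h4⟩
      · have := hx.2; rw [hf] at this; dsimp only at this; exact this
    · intro x _ x' _ hxx
      simp only [Prod.ext_iff] at hxx
      obtain ⟨⟨e1, e2⟩, e3, e4⟩ := hxx
      ext
      · exact e1
      · exact e4
      · exact e3
      · exact e2
  -- counting Dset
  set t : ℤ := (N - 1) / (q : ℤ) with ht
  have htnn : 0 ≤ t := Int.ediv_nonneg (by omega) (by omega)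
  have hDsub : Dset ⊆ (Finset.Icc (-t) t).image (fun j => (q : ℤ) * j) := by
    intro d hd
    rw [hD, Finset.mem_filter, Finset.mem_Icc] at hd
    obtain ⟨⟨hd1, hd2⟩, j, hj⟩ := hd
    rw [Finset.mem_image]
    refine ⟨j, ?_, hj.symm⟩
    rw [Finset.mem_Icc]
    constructor
    · have : -j ≤ t := by
        rw [ht, Int.le_ediv_iff_mul_le (by omega)]
        nlinarith [hj]
      omega
    · rw [ht, Int.le_ediv_iff_mul_le (by omega)]
      nlinarith [hj]
  have hDcard : Dset.card ≤ (2 * t + 1).toNat := by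
    calc Dset.card ≤ ((Finset.Icc (-t) t).image (fun j => (q : ℤ) * j)).card :=
          Finset.card_le_card hDsub
      _ ≤ (Finset.Icc (-t) t).card := Finset.card_image_le
      _ = (2 * t + 1).toNat := by rw [Int.card_Icc]; congr 1; omega
  have h0mem : (0 : ℤ) ∈ Dset := by
    rw [hD, Finset.mem_filter, Finset.mem_Icc]
    exact ⟨⟨by omega, by omega⟩, dvd_zero _⟩
  -- put it together in ℕ
  have hsplit : (quadruples q U Y).card
      ≤ (P a b).card + 2 * t.toNat * (T N).card := by
    rw [hcardsum, ← Finset.add_sum_erase _ _ h0mem]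
    have hbound : ∀ d ∈ Dset.erase 0,
        ((quadruples q U Y).filter fun x => f x = d).card ≤ (T N).card := by
      intro d _
      exact le_trans (hfibd d) (le_trans (card_S_le ha hb d)
        (le_trans (card_S0_le_T ha hb) (le_of_eq (by rw [hNdef]))))
    calc ((quadruples q U Y).filter fun x => f x = 0).card
          + ∑ d ∈ Dset.erase 0, ((quadruples q U Y).filter fun x => f x = d).card
        ≤ (P a b).card + ∑ d ∈ Dset.erase 0, (T N).card :=
          Nat.add_le_add hfib0 (Finset.sum_le_sum hbound)
      _ = (P a b).card + (Dset.erase 0).card * (T N).card := by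
          rw [Finset.sum_const, smul_eq_mul]
      _ ≤ (P a b).card + 2 * t.toNat * (T N).card := by
          gcongr
          have := Finset.card_erase_of_mem h0mem
          omega
  -- now real estimates
  have hUY1 : (1 : ℝ) ≤ U * Y := by nlinarith
  have hUYpos : (0 : ℝ) < U * Y := by linarith
  have hqpos : (0 : ℝ) < (q : ℝ) := by exact_mod_cast (by omega : (0:ℤ) < (q:ℤ))
  have haU : (a : ℝ) ≤ U := Int.floor_le U
  have hbY : (b : ℝ) ≤ Y := Int.floor_le Y
  have haR : (1 : ℝ) ≤ (a : ℝ) := by exact_mod_cast ha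
  have hbR : (1 : ℝ) ≤ (b : ℝ) := by exact_mod_cast hb
  have hNR : ((N : ℤ) : ℝ) ≤ U * Y := by
    rw [hNdef]
    push_cast
    nlinarith
  have hNR1 : (1 : ℝ) ≤ ((N : ℤ) : ℝ) := by exact_mod_cast hN
  set L : ℝ := Real.log (2 * U * Y) with hL
  have hlog2pos : (0 : ℝ) < Real.log 2 := Real.log_pos (by norm_num)
  have hLsplit : L = Real.log 2 + Real.log (U * Y) := by
    rw [hL, show (2 : ℝ) * U * Y = 2 * (U * Y) by ring,
      Real.log_mul (by norm_num) (by positivity)]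
  have hlogUY : (0 : ℝ) ≤ Real.log (U * Y) := Real.log_nonneg hUY1
  have hLpos : (0 : ℝ) < L := by rw [hLsplit]; linarith
  have hlogN : Real.log ((N : ℤ) : ℝ) ≤ Real.log (U * Y) :=
    Real.log_le_log (by linarith) hNR
  have hlogNnn : (0 : ℝ) ≤ Real.log ((N : ℤ) : ℝ) := Real.log_nonneg hNR1
  have hlog2le1 : Real.log 2 ≤ 1 := by
    have := Real.log_two_lt_d9
    linarith
  have h1L : 1 + Real.log ((N : ℤ) : ℝ) ≤ (1 / Real.log 2) * L := by
    rw [div_mul_eq_mul_div, one_mul, le_div_iff₀ hlog2pos, hLsplit]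
    nlinarith
  have h1Lnn : (0 : ℝ) ≤ 1 + Real.log ((N : ℤ) : ℝ) := by linarith
  -- T bound in ℝ
  have hTR : ((T N).card : ℝ) ≤ (U * Y) * ((1 / Real.log 2) * L) ^ 3 := by
    calc ((T N).card : ℝ) ≤ ((N : ℤ) : ℝ) * (1 + Real.log ((N : ℤ) : ℝ)) ^ 3 :=
          card_T_le N hN
      _ ≤ (U * Y) * ((1 / Real.log 2) * L) ^ 3 := by
          apply mul_le_mul hNR (pow_le_pow_left₀ h1Lnn h1L 3) (by positivity) (by positivity)
  -- P bound in ℝ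
  have hPR : ((P a b).card : ℝ) ≤ U * Y := by
    rw [P, Finset.card_product, Int.card_Icc, Int.card_Icc]
    have e1 : ((a + 1 - 1).toNat : ℝ) = (a : ℝ) := by
      have : ((a + 1 - 1).toNat : ℤ) = a := by omega
      exact_mod_cast this
    have e2 : ((b + 1 - 1).toNat : ℝ) = (b : ℝ) := by
      have : ((b + 1 - 1).toNat : ℤ) = b := by omega
      exact_mod_cast this
    push_cast
    rw [e1, e2]
    nlinarith
  -- t bound in ℝ
  have htR : ((t.toNat : ℕ) : ℝ) ≤ U * Y / (q : ℝ) := by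
    have e1 : ((t.toNat : ℕ) : ℝ) = (t : ℝ) := by
      have : ((t.toNat : ℕ) : ℤ) = t := Int.toNat_of_nonneg htnn
      exact_mod_cast this
    rw [e1, le_div_iff₀ hqpos]
    have h2 : (t : ℝ) * ((q : ℤ) : ℝ) ≤ ((N : ℤ) : ℝ) - 1 := by
      have := Int.ediv_mul_le (N - 1) (show ((q:ℤ)) ≠ 0 by omega)
      rw [← ht] at this
      exact_mod_cast this
    have : ((q : ℤ) : ℝ) = (q : ℝ) := by push_cast; ring
    rw [this] at h2
    linarith
  -- final chain
  have hfinal : ((quadruples q U Y).card : ℝ)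
      ≤ U * Y + 2 * (U * Y / (q : ℝ)) * ((U * Y) * ((1 / Real.log 2) * L) ^ 3) := by
    calc ((quadruples q U Y).card : ℝ)
        ≤ ((P a b).card : ℝ) + 2 * ((t.toNat : ℕ) : ℝ) * ((T N).card : ℝ) := by
          exact_mod_cast hsplit
      _ ≤ U * Y + 2 * (U * Y / (q : ℝ)) * ((U * Y) * ((1 / Real.log 2) * L) ^ 3) := by
          gcongr
  have hc : 2 * (1 / Real.log 2) ^ 3 ≤ 7 := by
    have hx := Real.log_two_gt_d9
    have h3 : (0.6931471803 : ℝ) ^ 3 ≤ (Real.log 2) ^ 3 :=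
      pow_le_pow_left₀ (by norm_num) (le_of_lt hx) 3
    rw [div_pow, one_pow, mul_one_div, div_le_iff₀ (by positivity)]
    nlinarith
  refine hfinal.trans ?_
  have hKnn : (0 : ℝ) ≤ U * Y / (q : ℝ) * L ^ 3 * (U * Y) := by positivity
  have expand : 2 * (U * Y / (q : ℝ)) * ((U * Y) * ((1 / Real.log 2) * L) ^ 3)
      = (2 * (1 / Real.log 2) ^ 3) * (U * Y / (q : ℝ) * L ^ 3 * (U * Y)) := by
    ring
  rw [expand]
  have step : (2 * (1 / Real.log 2) ^ 3) * (U * Y / (q : ℝ) * L ^ 3 * (U * Y))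
      ≤ 7 * (U * Y / (q : ℝ) * L ^ 3 * (U * Y)) := mul_le_mul_of_nonneg_right hc hKnn
  calc U * Y + 2 * (1 / Real.log 2) ^ 3 * (U * Y / ↑q * L ^ 3 * (U * Y))
      ≤ U * Y + 7 * (U * Y / ↑q * L ^ 3 * (U * Y)) := by linarith
    _ ≤ 7 * (1 + U * Y / ↑q * L ^ 3) * (U * Y) := by nlinarith
end

section
/- Let B : ℝ → ℝ be a twice continuously differentiable function supported in the interval [1,2]. There is a constant C, depending only on the suprema of |B|, |B'| and |B''|, such that for every real w ≥ 1 and every integer k ≥ 0, the Fourier coefficient b_k(w) = (1/π)·∫₀^π B(w·sin α)·cos(2kα) dα satisfies |b_k(w)| ≤ C·w/(k + w)². -/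
open Real Set intervalIntegral

private lemma supp_int_bound (g : ℝ → ℝ) (hg : Continuous g)
    (hs : ∀ x, x ∉ Set.Icc (1:ℝ) 2 → g x = 0) {M : ℝ} (hM : ∀ x, |g x| ≤ M)
    {w : ℝ} (hw : 1 ≤ w) :
    ∫ α in (0:ℝ)..π, |g (w * Real.sin α)| ≤ 4 * π * M / w := by
  have hw0 : 0 < w := by linarith
  have hM0 : 0 ≤ M := (abs_nonneg _).trans (hM 0)
  have hcont : Continuous fun α : ℝ => |g (w * Real.sin α)| :=
    (hg.comp (continuous_const.mul Real.continuous_sin)).abs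
  rcases le_or_gt 4 w with h4 | h4
  · set a := 2 * π / w with ha_def
    have hapos : 0 < a := by positivity
    have ha2 : a ≤ π / 2 := by
      rw [ha_def, div_le_div_iff₀ hw0 two_pos]
      nlinarith [pi_pos]
    have hpi2 : π / 2 ≤ π - a := by linarith
    have key : ∀ α ∈ Set.Icc a (π - a), g (w * Real.sin α) = 0 := by
      intro α hα
      apply hs
      have hsin : 4 / w ≤ Real.sin α := by
        have base : ∀ β : ℝ, a ≤ β → β ≤ π / 2 → 4 / w ≤ Real.sin β := by
          intro β hb1 hb2
          have h1 := Real.mul_le_sin (le_of_lt (lt_of_lt_of_le hapos hb1)) hb2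
          have h2 : 4 / w = 2 / π * a := by
            rw [ha_def]; field_simp; ring
          have h3 : 2 / π * a ≤ 2 / π * β := by
            apply mul_le_mul_of_nonneg_left hb1
            positivity
          linarith
        rcases le_total α (π / 2) with h | h
        · exact base α hα.1 h
        · have := base (π - α) (by linarith [hα.2]) (by linarith)
          rwa [Real.sin_pi_sub] at this
      intro hmem
      have : (4:ℝ) ≤ w * Real.sin α := by
        rw [div_le_iff₀ hw0] at hsin; linarith [mul_comm w (Real.sin α) ▸ hsin]
      nlinarith [hmem.2]
    have i1 : IntervalIntegrable (fun α : ℝ => |g (w * Real.sin α)|) MeasureTheory.volume 0 a :=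
      hcont.intervalIntegrable _ _
    have i2 : IntervalIntegrable (fun α : ℝ => |g (w * Real.sin α)|) MeasureTheory.volume a (π - a) :=
      hcont.intervalIntegrable _ _
    have i3 : IntervalIntegrable (fun α : ℝ => |g (w * Real.sin α)|) MeasureTheory.volume (π - a) π :=
      hcont.intervalIntegrable _ _
    have split : ∫ α in (0:ℝ)..π, |g (w * Real.sin α)|
        = (∫ α in (0:ℝ)..a, |g (w * Real.sin α)|)
          + (∫ α in a..(π - a), |g (w * Real.sin α)|)
          + ∫ α in (π - a)..π, |g (w * Real.sin α)| := by
      rw [integral_add_adjacent_intervals i1 i2, integral_add_adjacent_intervals (i1.trans i2) i3]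
    have mid : (∫ α in a..(π - a), |g (w * Real.sin α)|) = 0 := by
      rw [intervalIntegral.integral_congr (g := fun _ => (0:ℝ))]
      · simp
      · intro α hα
        rw [Set.uIcc_of_le (by linarith : a ≤ π - a)] at hα
        simp [key α hα]
    have end1 : (∫ α in (0:ℝ)..a, |g (w * Real.sin α)|) ≤ a * M := by
      calc (∫ α in (0:ℝ)..a, |g (w * Real.sin α)|) ≤ ∫ _ in (0:ℝ)..a, M :=
            intervalIntegral.integral_mono_on hapos.le i1 (intervalIntegrable_const)
              (fun x _ => hM _)
        _ = a * M := by simp [smul_eq_mul]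
    have end2 : (∫ α in (π - a)..π, |g (w * Real.sin α)|) ≤ a * M := by
      calc (∫ α in (π - a)..π, |g (w * Real.sin α)|) ≤ ∫ _ in (π - a)..π, M :=
            intervalIntegral.integral_mono_on (by linarith) i3 (intervalIntegrable_const)
              (fun x _ => hM _)
        _ = a * M := by rw [intervalIntegral.integral_const, smul_eq_mul]; ring
    rw [split, mid]
    have : a * M + 0 + a * M = 4 * π * M / w := by
      rw [ha_def]; field_simp; ring
    linarith
  · calc (∫ α in (0:ℝ)..π, |g (w * Real.sin α)|) ≤ ∫ _ in (0:ℝ)..π, M :=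
          intervalIntegral.integral_mono_on pi_pos.le (hcont.intervalIntegrable _ _)
            intervalIntegrable_const (fun x _ => hM _)
      _ = π * M := by simp [smul_eq_mul]
      _ ≤ 4 * π * M / w := by
          rw [le_div_iff₀ hw0]
          nlinarith [mul_nonneg (mul_nonneg pi_pos.le hM0) (show (0:ℝ) ≤ 4 - w by linarith)]

private lemma ibp_bound (f f' f'' : ℝ → ℝ) (c : ℝ) (hc : 0 < c)
    (hf : ∀ α, HasDerivAt f (f' α) α) (hf' : ∀ α, HasDerivAt f' (f'' α) α)
    (cf' : Continuous f') (cf'' : Continuous f'')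
    (h0 : f' 0 = 0) (hπ : f' Real.pi = 0) (hsin : Real.sin (c * Real.pi) = 0) :
    |∫ α in (0:ℝ)..Real.pi, f α * Real.cos (c * α)|
      ≤ (1 / c ^ 2) * ∫ α in (0:ℝ)..Real.pi, |f'' α| := by
  have hc0 : c ≠ 0 := hc.ne'
  have hv : ∀ α : ℝ, HasDerivAt (fun α => Real.sin (c * α) / c) (Real.cos (c * α)) α := by
    intro α
    have h := ((Real.hasDerivAt_sin (c * α)).comp α ((hasDerivAt_id α).const_mul c)).div_const c
    refine h.congr_deriv ?_
    field_simp
  have hv2 : ∀ α : ℝ, HasDerivAt (fun α => -Real.cos (c * α) / c) (Real.sin (c * α)) α := by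
    intro α
    have h := (((Real.hasDerivAt_cos (c * α)).comp α
      ((hasDerivAt_id α).const_mul c)).neg).div_const c
    refine h.congr_deriv ?_
    field_simp
  have ccos : Continuous fun α : ℝ => Real.cos (c * α) :=
    Real.continuous_cos.comp (continuous_const.mul continuous_id)
  have csin : Continuous fun α : ℝ => Real.sin (c * α) :=
    Real.continuous_sin.comp (continuous_const.mul continuous_id)
  have e1 : (∫ α in (0:ℝ)..Real.pi, f α * Real.cos (c * α))
      = -((∫ α in (0:ℝ)..Real.pi, f' α * Real.sin (c * α)) / c) := by
    rw [intervalIntegral.integral_mul_deriv_eq_deriv_mul (fun x _ => hf x) (fun x _ => hv x)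
      (cf'.intervalIntegrable _ _) (ccos.intervalIntegrable _ _)]
    simp [hsin, ← mul_div_assoc, intervalIntegral.integral_div]
  have e2 : (∫ α in (0:ℝ)..Real.pi, f' α * Real.sin (c * α))
      = (∫ α in (0:ℝ)..Real.pi, f'' α * Real.cos (c * α)) / c := by
    rw [intervalIntegral.integral_mul_deriv_eq_deriv_mul (fun x _ => hf' x) (fun x _ => hv2 x)
      (cf''.intervalIntegrable _ _) (csin.intervalIntegrable _ _)]
    simp [h0, hπ, ← mul_div_assoc, intervalIntegral.integral_div, mul_neg, neg_div,
      intervalIntegral.integral_neg]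
  rw [e1, e2]
  rw [abs_neg, abs_div, abs_div, abs_of_pos hc]
  have hb : |∫ α in (0:ℝ)..Real.pi, f'' α * Real.cos (c * α)|
      ≤ ∫ α in (0:ℝ)..Real.pi, |f'' α| := by
    calc |∫ α in (0:ℝ)..Real.pi, f'' α * Real.cos (c * α)|
        ≤ ∫ α in (0:ℝ)..Real.pi, |f'' α * Real.cos (c * α)| :=
          intervalIntegral.abs_integral_le_integral_abs Real.pi_pos.le
      _ ≤ ∫ α in (0:ℝ)..Real.pi, |f'' α| := by
          apply intervalIntegral.integral_mono_on Real.pi_pos.le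
            (((cf''.mul ccos).abs).intervalIntegrable _ _) ((cf''.abs).intervalIntegrable _ _)
          intro x _
          rw [Pi.mul_apply, abs_mul]
          exact mul_le_of_le_one_right (abs_nonneg _) (Real.abs_cos_le_one _)
  calc |∫ α in (0:ℝ)..Real.pi, f'' α * Real.cos (c * α)| / c / c
      ≤ (∫ α in (0:ℝ)..Real.pi, |f'' α|) / c / c := by
        gcongr
    _ = (1 / c ^ 2) * ∫ α in (0:ℝ)..Real.pi, |f'' α| := by
        ring


/-- **The Fourier coefficient bound (Section 5).** If `B` is a `C²` function supported in
`[1,2]` then its cosine Fourier coefficients `b_k(w) = π⁻¹ ∫₀^π B(w sin α) cos(2kα) dα`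
satisfy `|b_k(w)| ≤ C w (k + w)⁻²` for all `w ≥ 1` and `k ≥ 0`, where `C` depends only on
the suprema of `|B|`, `|B'|`, `|B''|`. -/
theorem fourier_coefficient_bound (B : ℝ → ℝ) (hB : ContDiff ℝ 2 B)
    (hsupp : Function.support B ⊆ Set.Icc 1 2) :
    ∃ C : ℝ, ∀ w : ℝ, 1 ≤ w → ∀ k : ℕ,
      |(1 / Real.pi) * ∫ α in (0 : ℝ)..Real.pi, B (w * Real.sin α) * Real.cos (2 * k * α)|
        ≤ C * w / ((k : ℝ) + w) ^ 2 := by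
  -- basic facts about B and its derivatives
  have hzero : ∀ x, x ∉ Set.Icc (1:ℝ) 2 → B x = 0 := by
    intro x hx
    by_contra h
    exact hx (hsupp h)
  have h2 : ContDiff ℝ (1 + 1) B := by norm_num; exact hB
  rw [contDiff_succ_iff_deriv] at h2
  set B1 := deriv B with hB1
  have h1 : ContDiff ℝ (0 + 1) B1 := by norm_num; exact h2.2.2
  rw [contDiff_succ_iff_deriv] at h1
  set B2 := deriv B1 with hB2
  have cB : Continuous B := hB.continuous
  have cB1 : Continuous B1 := h1.1.continuous
  have cB2 : Continuous B2 := by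
    have := h1.2.2
    exact contDiff_zero.mp this
  have hzero1 : ∀ x, x ∉ Set.Icc (1:ℝ) 2 → B1 x = 0 := by
    intro x hx
    have hev : B =ᶠ[nhds x] (fun _ => (0:ℝ)) := by
      apply Filter.eventually_of_mem (isClosed_Icc.isOpen_compl.mem_nhds hx)
      intro y hy
      exact hzero y hy
    rw [hB1, hev.deriv_eq, deriv_const]
  have hzero2 : ∀ x, x ∉ Set.Icc (1:ℝ) 2 → B2 x = 0 := by
    intro x hx
    have hev : B1 =ᶠ[nhds x] (fun _ => (0:ℝ)) := by
      apply Filter.eventually_of_mem (isClosed_Icc.isOpen_compl.mem_nhds hx)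
      intro y hy
      exact hzero1 y hy
    rw [hB2, hev.deriv_eq, deriv_const]
  -- bounds
  obtain ⟨M0, hM0⟩ := (HasCompactSupport.intro isCompact_Icc hzero).exists_bound_of_continuous cB
  obtain ⟨M1, hM1⟩ := (HasCompactSupport.intro isCompact_Icc hzero1).exists_bound_of_continuous cB1
  obtain ⟨M2, hM2⟩ := (HasCompactSupport.intro isCompact_Icc hzero2).exists_bound_of_continuous cB2
  simp only [Real.norm_eq_abs] at hM0 hM1 hM2
  have hM0nn : 0 ≤ M0 := (abs_nonneg _).trans (hM0 0)
  have hM1nn : 0 ≤ M1 := (abs_nonneg _).trans (hM1 0)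
  have hM2nn : 0 ≤ M2 := (abs_nonneg _).trans (hM2 0)
  refine ⟨16 * (M0 + M1 + M2), ?_⟩
  intro w hw k
  have hw0 : 0 < w := by linarith
  have hkw : 0 < ((k:ℝ) + w) := by positivity
  set I := ∫ α in (0 : ℝ)..Real.pi, B (w * Real.sin α) * Real.cos (2 * k * α) with hI
  -- continuity of the integrand components
  have csin : Continuous fun α : ℝ => w * Real.sin α := continuous_const.mul Real.continuous_sin
  rcases le_total (k:ℝ) w with hk | hk
  · -- crude bound
    have hIb : |I| ≤ 4 * Real.pi * M0 / w := by
      calc |I| ≤ ∫ α in (0:ℝ)..Real.pi, |B (w * Real.sin α) * Real.cos (2 * k * α)| :=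
            intervalIntegral.abs_integral_le_integral_abs Real.pi_pos.le
        _ ≤ ∫ α in (0:ℝ)..Real.pi, |B (w * Real.sin α)| := by
            apply intervalIntegral.integral_mono_on Real.pi_pos.le
            · exact ((cB.comp csin).mul (Real.continuous_cos.comp
                (continuous_const.mul continuous_id))).abs.intervalIntegrable _ _
            · exact (cB.comp csin).abs.intervalIntegrable _ _
            · intro x _
              rw [abs_mul]
              exact mul_le_of_le_one_right (abs_nonneg _) (Real.abs_cos_le_one _)
        _ ≤ 4 * Real.pi * M0 / w := supp_int_bound B cB hzero hM0 hw
    have hπ : |(1 / Real.pi) * I| ≤ 4 * M0 / w := by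
      rw [abs_mul, abs_of_pos (by positivity : (0:ℝ) < 1 / Real.pi)]
      calc 1 / Real.pi * |I| ≤ 1 / Real.pi * (4 * Real.pi * M0 / w) :=
            mul_le_mul_of_nonneg_left hIb (by positivity)
        _ = 4 * M0 / w := by
            field_simp
    refine hπ.trans ?_
    rw [div_le_div_iff₀ hw0 (by positivity)]
    have hkey : ((k:ℝ) + w) ^ 2 ≤ 4 * w ^ 2 := by nlinarith [Nat.cast_nonneg (α := ℝ) k]
    nlinarith [mul_nonneg hM0nn (sub_nonneg.mpr hkey), mul_nonneg (mul_nonneg hM1nn hw0.le) hw0.le,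
      mul_nonneg (mul_nonneg hM2nn hw0.le) hw0.le]
  · -- integration by parts bound
    have hk1 : (1:ℝ) ≤ (k:ℝ) := le_trans hw hk
    have hkpos : (0:ℝ) < (k:ℝ) := by linarith
    have hk0 : (k:ℝ) ≠ 0 := hkpos.ne'
    have hinner : ∀ α : ℝ, HasDerivAt (fun α : ℝ => w * Real.sin α) (w * Real.cos α) α :=
      fun α => (Real.hasDerivAt_sin α).const_mul w
    have hf : ∀ α : ℝ, HasDerivAt (fun α => B (w * Real.sin α))
        (B1 (w * Real.sin α) * (w * Real.cos α)) α :=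
      fun α => ((h2.1 (w * Real.sin α)).hasDerivAt).comp α (hinner α)
    have hf' : ∀ α : ℝ, HasDerivAt (fun α => B1 (w * Real.sin α) * (w * Real.cos α))
        (B2 (w * Real.sin α) * (w * Real.cos α) * (w * Real.cos α)
          + B1 (w * Real.sin α) * (w * -Real.sin α)) α :=
      fun α => by
        have h := (((h1.1 (w * Real.sin α)).hasDerivAt).comp α (hinner α)).mul
          ((Real.hasDerivAt_cos α).const_mul w)
        exact h
    have cf' : Continuous fun α => B1 (w * Real.sin α) * (w * Real.cos α) :=
      (cB1.comp csin).mul (continuous_const.mul Real.continuous_cos)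
    have cf'' : Continuous fun α => B2 (w * Real.sin α) * (w * Real.cos α) * (w * Real.cos α)
        + B1 (w * Real.sin α) * (w * -Real.sin α) :=
      (((cB2.comp csin).mul (continuous_const.mul Real.continuous_cos)).mul
        (continuous_const.mul Real.continuous_cos)).add
        ((cB1.comp csin).mul (continuous_const.mul Real.continuous_sin.neg))
    have h0' : B1 (w * Real.sin 0) * (w * Real.cos 0) = 0 := by
      rw [Real.sin_zero, mul_zero, hzero1 0 (by norm_num), zero_mul]
    have hπ' : B1 (w * Real.sin Real.pi) * (w * Real.cos Real.pi) = 0 := by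
      rw [Real.sin_pi, mul_zero, hzero1 0 (by norm_num), zero_mul]
    have hsin2k : Real.sin (2 * (k:ℝ) * Real.pi) = 0 := by
      rw [show (2 * (k:ℝ)) * Real.pi = ((2 * k : ℕ) : ℝ) * Real.pi by push_cast; ring]
      exact Real.sin_nat_mul_pi (2 * k)
    have hIb := ibp_bound (fun α => B (w * Real.sin α)) _ _ (2 * (k:ℝ))
      (by positivity) hf hf' cf' cf'' h0' hπ' hsin2k
    -- bound the integral of |f''|
    have hJ : (∫ α in (0:ℝ)..Real.pi, |B2 (w * Real.sin α) * (w * Real.cos α) * (w * Real.cos α)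
        + B1 (w * Real.sin α) * (w * -Real.sin α)|)
        ≤ 4 * Real.pi * (M2 * w + M1) := by
      have hpt : ∀ x ∈ Set.Icc (0:ℝ) Real.pi,
          |B2 (w * Real.sin x) * (w * Real.cos x) * (w * Real.cos x)
            + B1 (w * Real.sin x) * (w * -Real.sin x)|
          ≤ w ^ 2 * |B2 (w * Real.sin x)| + w * |B1 (w * Real.sin x)| := by
        intro x _
        have hwc : |w * Real.cos x| ≤ w := by
          rw [abs_mul, abs_of_pos hw0]
          exact mul_le_of_le_one_right hw0.le (Real.abs_cos_le_one _)
        have hws : |w * -Real.sin x| ≤ w := by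
          rw [abs_mul, abs_of_pos hw0, abs_neg]
          exact mul_le_of_le_one_right hw0.le (abs_le.mpr ⟨Real.neg_one_le_sin x, Real.sin_le_one x⟩)
        have h1 : |B2 (w * Real.sin x) * (w * Real.cos x) * (w * Real.cos x)|
            ≤ w ^ 2 * |B2 (w * Real.sin x)| := by
          rw [abs_mul, abs_mul]
          calc |B2 (w * Real.sin x)| * |w * Real.cos x| * |w * Real.cos x|
              ≤ |B2 (w * Real.sin x)| * w * w := by gcongr <;> exact abs_nonneg _
            _ = w ^ 2 * |B2 (w * Real.sin x)| := by ring
        have h2 : |B1 (w * Real.sin x) * (w * -Real.sin x)| ≤ w * |B1 (w * Real.sin x)| := by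
          rw [abs_mul]
          calc |B1 (w * Real.sin x)| * |w * -Real.sin x| ≤ |B1 (w * Real.sin x)| * w := by
                gcongr
            _ = w * |B1 (w * Real.sin x)| := by ring
        calc |B2 (w * Real.sin x) * (w * Real.cos x) * (w * Real.cos x)
              + B1 (w * Real.sin x) * (w * -Real.sin x)|
            ≤ |B2 (w * Real.sin x) * (w * Real.cos x) * (w * Real.cos x)|
              + |B1 (w * Real.sin x) * (w * -Real.sin x)| := abs_add_le _ _
          _ ≤ w ^ 2 * |B2 (w * Real.sin x)| + w * |B1 (w * Real.sin x)| := add_le_add h1 h2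
      have cint1 : IntervalIntegrable (fun x : ℝ => w ^ 2 * |B2 (w * Real.sin x)|)
          MeasureTheory.volume 0 Real.pi :=
        (continuous_const.mul ((cB2.comp csin).abs)).intervalIntegrable _ _
      have cint2 : IntervalIntegrable (fun x : ℝ => w * |B1 (w * Real.sin x)|)
          MeasureTheory.volume 0 Real.pi :=
        (continuous_const.mul ((cB1.comp csin).abs)).intervalIntegrable _ _
      calc (∫ α in (0:ℝ)..Real.pi, |B2 (w * Real.sin α) * (w * Real.cos α) * (w * Real.cos α)
            + B1 (w * Real.sin α) * (w * -Real.sin α)|)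
          ≤ ∫ α in (0:ℝ)..Real.pi,
              (w ^ 2 * |B2 (w * Real.sin α)| + w * |B1 (w * Real.sin α)|) :=
            intervalIntegral.integral_mono_on Real.pi_pos.le
              ((cf''.abs).intervalIntegrable _ _) (cint1.add cint2) hpt
        _ = w ^ 2 * (∫ α in (0:ℝ)..Real.pi, |B2 (w * Real.sin α)|)
            + w * ∫ α in (0:ℝ)..Real.pi, |B1 (w * Real.sin α)| := by
            rw [intervalIntegral.integral_add cint1 cint2,
              intervalIntegral.integral_const_mul, intervalIntegral.integral_const_mul]
        _ ≤ w ^ 2 * (4 * Real.pi * M2 / w) + w * (4 * Real.pi * M1 / w) := by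
            gcongr
            · exact supp_int_bound B2 cB2 hzero2 hM2 hw
            · exact supp_int_bound B1 cB1 hzero1 hM1 hw
        _ = 4 * Real.pi * (M2 * w + M1) := by
            field_simp
    have hIb2 : |I| ≤ (1 / (2 * (k:ℝ)) ^ 2) * (4 * Real.pi * (M2 * w + M1)) :=
      hIb.trans (mul_le_mul_of_nonneg_left hJ (by positivity))
    rw [abs_mul, abs_of_pos (by positivity : (0:ℝ) < 1 / Real.pi)]
    calc 1 / Real.pi * |I|
        ≤ 1 / Real.pi * ((1 / (2 * (k:ℝ)) ^ 2) * (4 * Real.pi * (M2 * w + M1))) :=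
          mul_le_mul_of_nonneg_left hIb2 (by positivity)
      _ = (M2 * w + M1) / (k:ℝ) ^ 2 := by
          field_simp
          ring
      _ ≤ 16 * (M0 + M1 + M2) * w / (((k:ℝ) + w) ^ 2) := by
          rw [div_le_div_iff₀ (by positivity) (by positivity)]
          have h1 : ((k:ℝ) + w) ^ 2 ≤ 4 * (k:ℝ) ^ 2 := by nlinarith
          nlinarith [mul_le_mul_of_nonneg_left h1 (show (0:ℝ) ≤ M2 * w + M1 by positivity),
            mul_nonneg (mul_nonneg hM0nn (sq_nonneg (k:ℝ))) hw0.le,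
            mul_nonneg (mul_nonneg hM1nn (sq_nonneg (k:ℝ))) (sub_nonneg.mpr hw),
            mul_nonneg (mul_nonneg hM2nn (sq_nonneg (k:ℝ))) hw0.le,
            mul_nonneg hM1nn (sq_nonneg (k:ℝ))]
end
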